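/- (Soundness and completeness of Tmd) For every set Γ of modal formulas and every modal formula α: Γ ⊢_Tmd α if and only if Γ ⊨_{M_Tmd} α, where M_Tmd is the four-valued Nmatrix with deterministic implication described in the context. -/

import Mathlib

/- ## Syntax of the modal language -/

inductive Form : Type
  | var : Nat → Form
  | neg : Form → Form
  | imp : Form → Form → Form
  | box : Form → Form
  deriving DecidableEq

namespace Form
/-- ◇α := ¬□¬α -/
def dia (α : Form) : Form := neg (box (neg α))
/-- α∨β := ¬α→β -/
def disj (α β : Form) : Form := imp (neg α) β
/-- α∧β := ¬(α→¬β) -/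
def conj (α β : Form) : Form := neg (imp α (neg β))
end Form

open Form

/-- Substitution instances of classical tautologies over {¬,→}: formulas true under
every Boolean assignment that respects negation and implication. -/
def Taut (φ : Form) : Prop :=
  ∀ v : Form → Bool,
    (∀ α, v (Form.neg α) = !(v α)) →
    (∀ α β, v (Form.imp α β) = (!(v α) || v β)) →
    v φ = true

/-- Hilbert-style derivations from a set of premises, with Modus Ponens as the only
inference rule, given a set `Ax` of axioms. -/
inductive Deriv (Ax : Form → Prop) (Γ : Set Form) : Form → Prop
  | prem {φ : Form} : φ ∈ Γ → Deriv Ax Γ φ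
  | ax {φ : Form} : Ax φ → Deriv Ax Γ φ
  | mp {φ ψ : Form} : Deriv Ax Γ (Form.imp φ ψ) → Deriv Ax Γ φ → Deriv Ax Γ ψ

/- ## Axiom schemas -/

def axK (α β : Form) : Form := (box (α.imp β)).imp ((box α).imp (box β))
def axK1 (α β : Form) : Form := (box (α.imp β)).imp ((dia α).imp (dia β))
def axK2 (α β : Form) : Form := (dia (α.imp β)).imp ((box α).imp (dia β))
def axM1 (α β : Form) : Form := (Form.neg (dia α)).imp (box (α.imp β))
def axM2 (α β : Form) : Form := (box β).imp (box (α.imp β))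
def axM3 (α β : Form) : Form := (dia β).imp (dia (α.imp β))
def axM4 (α β : Form) : Form := (dia (Form.neg α)).imp (dia (α.imp β))
def axT (α : Form) : Form := (box α).imp α
def axD (α : Form) : Form := (box α).imp (dia α)
def axDN1 (α : Form) : Form := (box α).imp (box (Form.neg (Form.neg α)))
def axDN2 (α : Form) : Form := (box (Form.neg (Form.neg α))).imp (box α)
def ax4 (α : Form) : Form := (box α).imp (box (box α))
def ax5 (α : Form) : Form := (dia (box α)).imp (box α)
def axKdet (α β : Form) : Form := (box (α.imp β)).imp ((dia α).imp (box β))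

def axK' (α β : Form) : Form := (dia α).imp (axK α β)
def axK1' (α β : Form) : Form := (dia (Form.neg β)).imp (axK1 α β)
def axK2' (α β : Form) : Form := (dia α).imp (axK2 α β)
def axM3' (α β : Form) : Form := ((dia α).disj (dia (Form.neg α))).imp (axM3 α β)
def axM4' (α β : Form) : Form := (dia (Form.neg β)).imp (axM4 α β)
def axI1 (α β : Form) : Form :=
  ((box α).conj (box (Form.neg α))).imp ((box (α.imp β)).conj (box (Form.neg (α.imp β))))
def axI2 (α β : Form) : Form :=
  ((box β).conj (box (Form.neg β))).imp ((box (α.imp β)).conj (box (Form.neg (α.imp β))))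

/-- The recovery operator ∘α := □α→◇α. -/
def circm (α : Form) : Form := (box α).imp (dia α)
/-- •α := ¬∘α. -/
def bulm (α : Form) : Form := Form.neg (circm α)
/-- The recovery operator ∘'α := (□α→α)∧(□¬α→¬α). -/
def circm' (α : Form) : Form :=
  ((box α).imp α).conj ((box (Form.neg α)).imp (Form.neg α))

/- ## Hilbert calculi -/

/-- The system Km. -/
inductive KmAx : Form → Prop
  | pc {φ : Form} : Taut φ → KmAx φ
  | k' (α β : Form) : KmAx (axK' α β)
  | k1' (α β : Form) : KmAx (axK1' α β)
  | k2' (α β : Form) : KmAx (axK2' α β)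
  | m1 (α β : Form) : KmAx (axM1 α β)
  | m2 (α β : Form) : KmAx (axM2 α β)
  | m3' (α β : Form) : KmAx (axM3' α β)
  | m4' (α β : Form) : KmAx (axM4' α β)
  | i1 (α β : Form) : KmAx (axI1 α β)
  | i2 (α β : Form) : KmAx (axI2 α β)
  | dn1 (α : Form) : KmAx (axDN1 α)
  | dn2 (α : Form) : KmAx (axDN2 α)

/-- The system K4m = Km + (4). -/
inductive K4mAx : Form → Prop
  | km {φ : Form} : KmAx φ → K4mAx φ
  | four (α : Form) : K4mAx (ax4 α)

/-- The system K45m = Km + (4) + (5). -/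
inductive K45mAx : Form → Prop
  | km {φ : Form} : KmAx φ → K45mAx φ
  | four (α : Form) : K45mAx (ax4 α)
  | five (α : Form) : K45mAx (ax5 α)

/-- The system Dm. -/
inductive DmAx : Form → Prop
  | pc {φ : Form} : Taut φ → DmAx φ
  | k (α β : Form) : DmAx (axK α β)
  | k1 (α β : Form) : DmAx (axK1 α β)
  | k2 (α β : Form) : DmAx (axK2 α β)
  | m1 (α β : Form) : DmAx (axM1 α β)
  | m2 (α β : Form) : DmAx (axM2 α β)
  | m3 (α β : Form) : DmAx (axM3 α β)
  | m4 (α β : Form) : DmAx (axM4 α β)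
  | d (α : Form) : DmAx (axD α)
  | dn1 (α : Form) : DmAx (axDN1 α)
  | dn2 (α : Form) : DmAx (axDN2 α)

/-- The system Tm. -/
inductive TmAx : Form → Prop
  | pc {φ : Form} : Taut φ → TmAx φ
  | k (α β : Form) : TmAx (axK α β)
  | k1 (α β : Form) : TmAx (axK1 α β)
  | k2 (α β : Form) : TmAx (axK2 α β)
  | m1 (α β : Form) : TmAx (axM1 α β)
  | m2 (α β : Form) : TmAx (axM2 α β)
  | m3 (α β : Form) : TmAx (axM3 α β)
  | m4 (α β : Form) : TmAx (axM4 α β)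
  | t (α : Form) : TmAx (axT α)
  | dn1 (α : Form) : TmAx (axDN1 α)
  | dn2 (α : Form) : TmAx (axDN2 α)

/-- The system T45m = Tm + (4) + (5). -/
inductive T45mAx : Form → Prop
  | tm {φ : Form} : TmAx φ → T45mAx φ
  | four (α : Form) : T45mAx (ax4 α)
  | five (α : Form) : T45mAx (ax5 α)

/-- The system Tmd: Tm with (K1) replaced by (Kdet). -/
inductive TmdAx : Form → Prop
  | pc {φ : Form} : Taut φ → TmdAx φ
  | k (α β : Form) : TmdAx (axK α β)
  | kdet (α β : Form) : TmdAx (axKdet α β)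
  | k2 (α β : Form) : TmdAx (axK2 α β)
  | m1 (α β : Form) : TmdAx (axM1 α β)
  | m2 (α β : Form) : TmdAx (axM2 α β)
  | m3 (α β : Form) : TmdAx (axM3 α β)
  | m4 (α β : Form) : TmdAx (axM4 α β)
  | t (α : Form) : TmdAx (axT α)
  | dn1 (α : Form) : TmdAx (axDN1 α)
  | dn2 (α : Form) : TmdAx (axDN2 α)

/-- The system Tm4d = Tmd + (4). -/
inductive Tm4dAx : Form → Prop
  | tmd {φ : Form} : TmdAx φ → Tm4dAx φ
  | four (α : Form) : Tm4dAx (ax4 α)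

/-- The system Tm + (Kdet). -/
inductive TmKdetAx : Form → Prop
  | tm {φ : Form} : TmAx φ → TmKdetAx φ
  | kdet (α β : Form) : TmKdetAx (axKdet α β)

/-- The system Km∘. -/
inductive KmCircAx : Form → Prop
  | pc {φ : Form} : Taut φ → KmCircAx φ
  | k'' (α β : Form) : KmCircAx ((circm α).imp (axK α β))
  | k1'' (α β : Form) : KmCircAx ((circm β).imp (axK1 α β))
  | k2'' (α β : Form) : KmCircAx ((circm α).imp (axK2 α β))
  | m1 (α β : Form) : KmCircAx (axM1 α β)
  | m2 (α β : Form) : KmCircAx (axM2 α β)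
  | m3'' (α β : Form) : KmCircAx ((circm α).imp (axM3 α β))
  | m4'' (α β : Form) : KmCircAx ((circm β).imp (axM4 α β))
  | i1' (α β : Form) : KmCircAx ((bulm α).imp (bulm (α.imp β)))
  | i2' (α β : Form) : KmCircAx ((bulm β).imp (bulm (α.imp β)))
  | dn1 (α : Form) : KmCircAx (axDN1 α)
  | dn2 (α : Form) : KmCircAx (axDN2 α)

/- ## The eight-valued non-deterministic semantics -/

/-- The modal "letters" T, C, F, I. -/
inductive Ltr : Type
  | T | C | F | I
  deriving DecidableEq

/-- An eight-valued truth-value: a letter together with a sign (`true` = +). -/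
structure V8 where
  ltr : Ltr
  sgn : Bool
  deriving DecidableEq

/-- Designated values: those with sign +. -/
def V8.desig (x : V8) : Prop := x.sgn = true

/-- Letter of the negation. -/
def lneg : Ltr → Ltr
  | .T => .F
  | .C => .C
  | .F => .T
  | .I => .I

/-- The (deterministic) multioperator for ¬. -/
def neg8 (x : V8) : Set V8 := {⟨lneg x.ltr, !x.sgn⟩}

/-- Set of possible letters of an implication, given the letters of the components. -/
def limp : Ltr → Ltr → Set Ltr
  | .I, _ => {Ltr.I}
  | .T, .I => {Ltr.I}
  | .C, .I => {Ltr.I}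
  | .F, .I => {Ltr.I}
  | .T, .T => {Ltr.T}
  | .T, .C => {Ltr.C}
  | .T, .F => {Ltr.F}
  | .C, .T => {Ltr.T}
  | .C, .C => {Ltr.T, Ltr.C}
  | .C, .F => {Ltr.C}
  | .F, .T => {Ltr.T}
  | .F, .C => {Ltr.T}
  | .F, .F => {Ltr.T}

/-- The multioperator for →: sign is material implication of the signs, letter as in `limp`. -/
def imp8 (x y : V8) : Set V8 :=
  { z | z.ltr ∈ limp x.ltr y.ltr ∧ z.sgn = (!x.sgn || y.sgn) }

/-- The multioperator for □ in (the Nmatrix for) Km. -/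
def box8Km (x : V8) : Set V8 :=
  if x.ltr = Ltr.T ∨ x.ltr = Ltr.I then { z | z.sgn = true } else { z | z.sgn = false }

/-- The multioperator for □ in the Nmatrix for K4m. -/
def box8K4m (x : V8) : Set V8 :=
  if x.ltr = Ltr.T ∨ x.ltr = Ltr.I then ({⟨Ltr.T, true⟩, ⟨Ltr.I, true⟩} : Set V8)
  else { z | z.sgn = false }

/-- The multioperator for □ in the Nmatrix for K45m. -/
def box8K45m (x : V8) : Set V8 :=
  if x.ltr = Ltr.T ∨ x.ltr = Ltr.I then ({⟨Ltr.T, true⟩, ⟨Ltr.I, true⟩} : Set V8)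
  else ({⟨Ltr.F, false⟩, ⟨Ltr.I, false⟩} : Set V8)

/-- A valuation over the eight-valued Nmatrix with the given □-multioperator. -/
def IsVal8 (boxOp : V8 → Set V8) (v : Form → V8) : Prop :=
  (∀ α, v (Form.neg α) ∈ neg8 (v α)) ∧
  (∀ α β, v (Form.imp α β) ∈ imp8 (v α) (v β)) ∧
  (∀ α, v (Form.box α) ∈ boxOp (v α))

/-- Semantic consequence over the eight-valued Nmatrix with the given □-multioperator. -/
def NmEntails (boxOp : V8 → Set V8) (Γ : Set Form) (φ : Form) : Prop :=
  ∀ v : Form → V8, IsVal8 boxOp v → (∀ γ ∈ Γ, (v γ).desig) → (v φ).desig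

/- ## Multialgebras -/

/-- A multialgebra over {¬,→,□}, presented on the carrier `V8` with a chosen domain. -/
structure MAlg where
  dom : Set V8
  negOp : V8 → Set V8
  impOp : V8 → V8 → Set V8
  boxOp : V8 → Set V8

/-- `A` is a submultialgebra of `B`. -/
def SubMAlg (A B : MAlg) : Prop :=
  A.dom ⊆ B.dom ∧
  (∀ x ∈ A.dom, A.negOp x ⊆ B.negOp x) ∧
  (∀ x ∈ A.dom, ∀ y ∈ A.dom, A.impOp x y ⊆ B.impOp x y) ∧
  (∀ x ∈ A.dom, A.boxOp x ⊆ B.boxOp x)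

/-- Domain of the Nmatrix for Dm: the six non-I values. -/
def domDm : Set V8 := { x | x.ltr ≠ Ltr.I }

/-- Domain of the Nmatrix for Tm: {T+, C+, C−, F−}. -/
def domTm : Set V8 :=
  ({⟨Ltr.T, true⟩, ⟨Ltr.C, true⟩, ⟨Ltr.C, false⟩, ⟨Ltr.F, false⟩} : Set V8)

/-- The multialgebra underlying the Nmatrix for Km. -/
def A_Km : MAlg := ⟨Set.univ, neg8, imp8, box8Km⟩

/-- The □-multioperator of Dm: T ↦ {T+,C+,F+}, C∪F ↦ {T−,C−,F−}. -/
def boxDm (x : V8) : Set V8 :=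
  if x.ltr = Ltr.T then { z | z.sgn = true } ∩ domDm else { z | z.sgn = false } ∩ domDm

/-- The multialgebra underlying the Nmatrix for Dm. -/
def A_Dm : MAlg :=
  ⟨domDm, fun x => neg8 x ∩ domDm, fun x y => imp8 x y ∩ domDm, boxDm⟩

/-- The □-multioperator of Tm: T+ ↦ {T+,C+}, and C+, C−, F− ↦ {C−,F−}. -/
def boxTm (x : V8) : Set V8 :=
  if x = ⟨Ltr.T, true⟩ then ({⟨Ltr.T, true⟩, ⟨Ltr.C, true⟩} : Set V8)
  else ({⟨Ltr.C, false⟩, ⟨Ltr.F, false⟩} : Set V8)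

/-- The multialgebra underlying the Nmatrix for Tm. -/
def A_Tm : MAlg :=
  ⟨domTm, fun x => neg8 x ∩ domTm, fun x y => imp8 x y ∩ domTm, boxTm⟩

/- ## The four-valued Nmatrix for Tmd -/

/-- The four values T+, C+, C−, F−. -/
inductive V4 : Type
  | Tp | Cp | Cm | Fm
  deriving DecidableEq

/-- Designated values of the Tmd Nmatrix: T+ and C+. -/
def V4.desig (x : V4) : Prop := x = V4.Tp ∨ x = V4.Cp

/-- Negation: deterministic. -/
def neg4 : V4 → V4
  | .Tp => .Fm
  | .Cp => .Cm
  | .Cm => .Cp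
  | .Fm => .Tp

/-- Position in the chain F− < C− < C+ < T+. -/
def rank4 : V4 → Nat
  | .Fm => 0
  | .Cm => 1
  | .Cp => 2
  | .Tp => 3

def ofRank4 : Nat → V4
  | 0 => .Fm
  | 1 => .Cm
  | 2 => .Cp
  | _ => .Tp

/-- The deterministic implication of Tmd: x→y is the maximum of ¬x and y in the chain. -/
def imp4 (x y : V4) : V4 := ofRank4 (max (rank4 (neg4 x)) (rank4 y))

/-- The □-multioperator of Tmd: T+ ↦ {T+,C+}; C+, C−, F− ↦ {C−,F−}. -/
def box4 (x : V4) : Set V4 :=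
  if x = V4.Tp then ({V4.Tp, V4.Cp} : Set V4) else ({V4.Cm, V4.Fm} : Set V4)

/-- A valuation over the Nmatrix for Tmd. -/
def IsVal4 (v : Form → V4) : Prop :=
  (∀ α, v (Form.neg α) = neg4 (v α)) ∧
  (∀ α β, v (Form.imp α β) = imp4 (v α) (v β)) ∧
  (∀ α, v (Form.box α) ∈ box4 (v α))

/-- Semantic consequence over the Nmatrix for Tmd. -/
def TmdEntails (Γ : Set Form) (φ : Form) : Prop :=
  ∀ v : Form → V4, IsVal4 v → (∀ γ ∈ Γ, (v γ).desig) → (v φ).desig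

/- ## Deterministic logical matrices -/

/-- A deterministic logical matrix over the signature {¬,→,□}. -/
structure DetMatrix where
  carrier : Type
  negOp : carrier → carrier
  impOp : carrier → carrier → carrier
  boxOp : carrier → carrier
  desig : Set carrier

/-- A valuation (homomorphism) over a deterministic matrix. -/
def DetMatrix.IsVal (Mat : DetMatrix) (h : Form → Mat.carrier) : Prop :=
  (∀ α, h (Form.neg α) = Mat.negOp (h α)) ∧
  (∀ α β, h (Form.imp α β) = Mat.impOp (h α) (h β)) ∧
  (∀ α, h (Form.box α) = Mat.boxOp (h α))

/-- Semantic consequence over a deterministic matrix. -/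
def DetMatrix.Entails (Mat : DetMatrix) (Γ : Set Form) (φ : Form) : Prop :=
  ∀ h : Form → Mat.carrier, Mat.IsVal h → (∀ γ ∈ Γ, h γ ∈ Mat.desig) → h φ ∈ Mat.desig

/-- Validity in a deterministic matrix. -/
def DetMatrix.Valid (Mat : DetMatrix) (φ : Form) : Prop :=
  ∀ h : Form → Mat.carrier, Mat.IsVal h → h φ ∈ Mat.desig

/- ## The Dugundji formulas δ(m) -/

/-- Left-associated disjunction of a nonempty list of formulas. -/
def bigOr : List Form → Form
  | [] => Form.var 0
  | a :: l => l.foldl Form.disj a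

/-- α(m): the left-associated disjunction of the variables p_1, …, p_m. -/
def alphaF (m : Nat) : Form := bigOr ((List.range m).map Form.var)

/-- β_i(m): the left-associated disjunction of p_1, …, p_m with p_i omitted. -/
def betaF (m i : Nat) : Form :=
  bigOr (((List.range m).filter (fun j => j != i)).map Form.var)

/-- δ(m): the left-associated disjunction of the formulas □α(m)→□β_i(m), 1 ≤ i ≤ m. -/
def deltaF (m : Nat) : Form :=
  bigOr ((List.range m).map (fun i => (Form.box (alphaF m)).imp (Form.box (betaF m i))))

/- ## Auxiliary material for the proof -/

section TmdProof

open Form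

/-! ### Boolean decision helpers for the 4-valued Nmatrix -/

def box4d (x z : V4) : Bool :=
  if x = V4.Tp then (z == V4.Tp || z == V4.Cp) else (z == V4.Cm || z == V4.Fm)

lemma mem_box4_iff (x z : V4) : z ∈ box4 x ↔ box4d x z = true := by
  cases x <;> cases z <;> simp [box4, box4d]

instance (x : V4) : Decidable x.desig := by unfold V4.desig; infer_instance

instance : Fintype V4 :=
  ⟨{V4.Tp, V4.Cp, V4.Cm, V4.Fm}, by intro x; cases x <;> simp⟩

lemma desig_mp4 : ∀ x y : V4, (imp4 x y).desig → x.desig → y.desig := by decide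

def bval4 (x : V4) : Bool := decide x.desig

lemma bval4_neg (x : V4) : bval4 (neg4 x) = !(bval4 x) := by cases x <;> rfl

lemma bval4_imp (x y : V4) : bval4 (imp4 x y) = (!(bval4 x) || bval4 y) := by
  cases x <;> cases y <;> rfl

/-! ### Soundness of each axiom, by finite check -/

lemma sound4_K : ∀ a b x y z : V4, box4d (imp4 a b) x → box4d a y → box4d b z →
    (imp4 x (imp4 y z)).desig := by decide

lemma sound4_Kdet : ∀ a b x u z : V4, box4d (imp4 a b) x → box4d (neg4 a) u → box4d b z →
    (imp4 x (imp4 (neg4 u) z)).desig := by decide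

lemma sound4_K2 : ∀ a b w y u : V4, box4d (neg4 (imp4 a b)) w → box4d a y →
    box4d (neg4 b) u → (imp4 (neg4 w) (imp4 y (neg4 u))).desig := by decide

lemma sound4_M1 : ∀ a b u x : V4, box4d (neg4 a) u → box4d (imp4 a b) x →
    (imp4 (neg4 (neg4 u)) x).desig := by decide

lemma sound4_M2 : ∀ a b z x : V4, box4d b z → box4d (imp4 a b) x →
    (imp4 z x).desig := by decide

lemma sound4_M3 : ∀ a b u w : V4, box4d (neg4 b) u → box4d (neg4 (imp4 a b)) w →
    (imp4 (neg4 u) (neg4 w)).desig := by decide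

lemma sound4_M4 : ∀ a b u w : V4, box4d (neg4 (neg4 a)) u → box4d (neg4 (imp4 a b)) w →
    (imp4 (neg4 u) (neg4 w)).desig := by decide

lemma sound4_T : ∀ (a y : V4), box4d a y → (imp4 y a).desig := by decide

lemma sound4_DN1 : ∀ a y z : V4, box4d a y → box4d (neg4 (neg4 a)) z →
    (imp4 y z).desig := by decide

lemma sound4_DN2 : ∀ a y z : V4, box4d (neg4 (neg4 a)) y → box4d a z →
    (imp4 y z).desig := by decide

/-! ### Soundness -/

lemma Tmd_sound {Γ : Set Form} {α : Form} (h : Deriv TmdAx Γ α) : TmdEntails Γ α := by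
  intro v hv hΓ
  obtain ⟨hn, hi, hb⟩ := hv
  induction h with
  | prem hφ => exact hΓ _ hφ
  | mp _ _ ih1 ih2 =>
    rename_i φ ψ _ _
    have h1 := ih1
    rw [hi] at h1
    exact desig_mp4 _ _ h1 ih2
  | ax hφ =>
    rename_i φ
    cases hφ with
    | pc ht =>
      have key : bval4 (v φ) = true := by
        apply ht (fun ψ => bval4 (v ψ))
        · intro β; rw [hn, bval4_neg]
        · intro β γ; rw [hi, bval4_imp]
      exact of_decide_eq_true key
    | k β γ =>
      have h1 : v (Form.box (β.imp γ)) ∈ box4 (imp4 (v β) (v γ)) := by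
        have := hb (β.imp γ); rwa [hi] at this
      have h2 := hb β
      have h3 := hb γ
      rw [mem_box4_iff] at h1 h2 h3
      have := sound4_K (v β) (v γ) _ _ _ h1 h2 h3
      simpa [axK, hi] using this
    | kdet β γ =>
      have h1 : v (Form.box (β.imp γ)) ∈ box4 (imp4 (v β) (v γ)) := by
        have := hb (β.imp γ); rwa [hi] at this
      have h2 : v (Form.box (Form.neg β)) ∈ box4 (neg4 (v β)) := by
        have := hb (Form.neg β); rwa [hn] at this
      have h3 := hb γ
      rw [mem_box4_iff] at h1 h2 h3
      have := sound4_Kdet (v β) (v γ) _ _ _ h1 h2 h3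
      simpa [axKdet, dia, hi, hn] using this
    | k2 β γ =>
      have h1 : v (Form.box (Form.neg (β.imp γ))) ∈ box4 (neg4 (imp4 (v β) (v γ))) := by
        have := hb (Form.neg (β.imp γ)); rwa [hn, hi] at this
      have h2 := hb β
      have h3 : v (Form.box (Form.neg γ)) ∈ box4 (neg4 (v γ)) := by
        have := hb (Form.neg γ); rwa [hn] at this
      rw [mem_box4_iff] at h1 h2 h3
      have := sound4_K2 (v β) (v γ) _ _ _ h1 h2 h3
      simpa [axK2, dia, hi, hn] using this
    | m1 β γ =>
      have h1 : v (Form.box (Form.neg β)) ∈ box4 (neg4 (v β)) := by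
        have := hb (Form.neg β); rwa [hn] at this
      have h2 : v (Form.box (β.imp γ)) ∈ box4 (imp4 (v β) (v γ)) := by
        have := hb (β.imp γ); rwa [hi] at this
      rw [mem_box4_iff] at h1 h2
      have := sound4_M1 (v β) (v γ) _ _ h1 h2
      simpa [axM1, dia, hi, hn] using this
    | m2 β γ =>
      have h1 := hb γ
      have h2 : v (Form.box (β.imp γ)) ∈ box4 (imp4 (v β) (v γ)) := by
        have := hb (β.imp γ); rwa [hi] at this
      rw [mem_box4_iff] at h1 h2
      have := sound4_M2 (v β) (v γ) _ _ h1 h2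
      simpa [axM2, hi] using this
    | m3 β γ =>
      have h1 : v (Form.box (Form.neg γ)) ∈ box4 (neg4 (v γ)) := by
        have := hb (Form.neg γ); rwa [hn] at this
      have h2 : v (Form.box (Form.neg (β.imp γ))) ∈ box4 (neg4 (imp4 (v β) (v γ))) := by
        have := hb (Form.neg (β.imp γ)); rwa [hn, hi] at this
      rw [mem_box4_iff] at h1 h2
      have := sound4_M3 (v β) (v γ) _ _ h1 h2
      simpa [axM3, dia, hi, hn] using this
    | m4 β γ =>
      have h1 : v (Form.box (Form.neg (Form.neg β))) ∈ box4 (neg4 (neg4 (v β))) := by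
        have := hb (Form.neg (Form.neg β)); rwa [hn, hn] at this
      have h2 : v (Form.box (Form.neg (β.imp γ))) ∈ box4 (neg4 (imp4 (v β) (v γ))) := by
        have := hb (Form.neg (β.imp γ)); rwa [hn, hi] at this
      rw [mem_box4_iff] at h1 h2
      have := sound4_M4 (v β) (v γ) _ _ h1 h2
      simpa [axM4, dia, hi, hn] using this
    | t β =>
      have h1 := hb β
      rw [mem_box4_iff] at h1
      have := sound4_T (v β) _ h1
      simpa [axT, hi] using this
    | dn1 β =>
      have h1 := hb β
      have h2 : v (Form.box (Form.neg (Form.neg β))) ∈ box4 (neg4 (neg4 (v β))) := by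
        have := hb (Form.neg (Form.neg β)); rwa [hn, hn] at this
      rw [mem_box4_iff] at h1 h2
      have := sound4_DN1 (v β) _ _ h1 h2
      simpa [axDN1, hi] using this
    | dn2 β =>
      have h1 : v (Form.box (Form.neg (Form.neg β))) ∈ box4 (neg4 (neg4 (v β))) := by
        have := hb (Form.neg (Form.neg β)); rwa [hn, hn] at this
      have h2 := hb β
      rw [mem_box4_iff] at h1 h2
      have := sound4_DN2 (v β) _ _ h1 h2
      simpa [axDN2, hi] using this

end TmdProof

section TmdCompleteness

open Form
open scoped Classical

/-! ### Basic derivation facts -/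

lemma deriv_mono {Ax : Form → Prop} {Γ Γ' : Set Form} {φ : Form} (hs : Γ ⊆ Γ')
    (h : Deriv Ax Γ φ) : Deriv Ax Γ' φ := by
  induction h with
  | prem h => exact Deriv.prem (hs h)
  | ax h => exact Deriv.ax h
  | mp _ _ ih1 ih2 => exact Deriv.mp ih1 ih2

lemma deriv_cut {Ax : Form → Prop} {Γ : Set Form} {φ ψ : Form}
    (h1 : Deriv Ax Γ φ) (h2 : Deriv Ax (insert φ Γ) ψ) : Deriv Ax Γ ψ := by
  induction h2 with
  | prem h =>
    rcases Set.mem_insert_iff.1 h with rfl | h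
    · exact h1
    · exact Deriv.prem h
  | ax h => exact Deriv.ax h
  | mp _ _ ih1 ih2 => exact Deriv.mp ih1 ih2

/-- Tautology helper: all needed classical tautologies. -/
lemma taut_of {φ : Form}
    (h : ∀ v : Form → Bool,
      (∀ α, v (Form.neg α) = !(v α)) →
      (∀ α β, v (Form.imp α β) = (!(v α) || v β)) → v φ = true) : Taut φ := h

lemma deriv_taut {Γ : Set Form} {φ : Form} (h : Taut φ) : Deriv TmdAx Γ φ :=
  Deriv.ax (TmdAx.pc h)

lemma taut_K (φ ψ : Form) : Taut (ψ.imp (φ.imp ψ)) := by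
  intro v hn hi; simp only [hi]; cases v φ <;> cases v ψ <;> rfl

lemma taut_S (φ χ ψ : Form) :
    Taut ((φ.imp (χ.imp ψ)).imp ((φ.imp χ).imp (φ.imp ψ))) := by
  intro v hn hi; simp only [hi]; cases v φ <;> cases v χ <;> cases v ψ <;> rfl

lemma taut_id (φ : Form) : Taut (φ.imp φ) := by
  intro v hn hi; simp only [hi]; cases v φ <;> rfl

lemma taut_efq (φ ψ : Form) : Taut ((Form.neg φ).imp (φ.imp ψ)) := by
  intro v hn hi; simp only [hi, hn]; cases v φ <;> cases v ψ <;> rfl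

lemma taut_absurd (φ ψ : Form) : Taut (φ.imp ((Form.neg φ).imp ψ)) := by
  intro v hn hi; simp only [hi, hn]; cases v φ <;> cases v ψ <;> rfl

lemma taut_cases (φ ψ : Form) :
    Taut ((φ.imp ψ).imp (((Form.neg φ).imp ψ).imp ψ)) := by
  intro v hn hi; simp only [hi, hn]; cases v φ <;> cases v ψ <;> rfl

lemma taut_dni (φ : Form) : Taut (φ.imp (Form.neg (Form.neg φ))) := by
  intro v hn hi; simp only [hi, hn]; cases v φ <;> rfl

/-- Deduction theorem for Tmd. -/
lemma deduction {Γ : Set Form} {φ ψ : Form}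
    (h : Deriv TmdAx (insert φ Γ) ψ) : Deriv TmdAx Γ (φ.imp ψ) := by
  induction h with
  | prem h =>
    rcases Set.mem_insert_iff.1 h with rfl | h
    · exact deriv_taut (taut_id _)
    · exact Deriv.mp (deriv_taut (taut_K φ _)) (Deriv.prem h)
  | ax h => exact Deriv.mp (deriv_taut (taut_K φ _)) (Deriv.ax h)
  | mp _ _ ih1 ih2 =>
    exact Deriv.mp (Deriv.mp (deriv_taut (taut_S φ _ _)) ih1) ih2

/-- Compactness: every derivation uses finitely many premises. -/
lemma deriv_finite {Ax : Form → Prop} {Γ : Set Form} {φ : Form}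
    (h : Deriv Ax Γ φ) : ∃ S : Finset Form, ↑S ⊆ Γ ∧ Deriv Ax ↑S φ := by
  induction h with
  | prem h =>
    exact ⟨{_}, by simpa using h, Deriv.prem (by simp)⟩
  | ax h => exact ⟨∅, by simp, Deriv.ax h⟩
  | mp _ _ ih1 ih2 =>
    obtain ⟨S1, hS1, hd1⟩ := ih1
    obtain ⟨S2, hS2, hd2⟩ := ih2
    refine ⟨S1 ∪ S2, ?_, Deriv.mp (deriv_mono ?_ hd1) (deriv_mono ?_ hd2)⟩
    · intro x hx; simp only [Finset.coe_union, Set.mem_union] at hx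
      rcases hx with hx | hx; exacts [hS1 hx, hS2 hx]
    · intro x hx; simp only [Finset.coe_union, Set.mem_union]; exact Or.inl hx
    · intro x hx; simp only [Finset.coe_union, Set.mem_union]; exact Or.inr hx

/-- A maximal α-unprovable theory. -/
structure MaxTh (α : Form) (Δ : Set Form) : Prop where
  nd : ¬ Deriv TmdAx Δ α
  max : ∀ φ, φ ∉ Δ → Deriv TmdAx (insert φ Δ) α

namespace MaxTh

variable {α : Form} {Δ : Set Form}

lemma closed (H : MaxTh α Δ) {φ : Form} (h : Deriv TmdAx Δ φ) : φ ∈ Δ := by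
  by_contra hφ
  exact H.nd (deriv_cut h (H.max φ hφ))

lemma mem_ax (H : MaxTh α Δ) {φ : Form} (h : TmdAx φ) : φ ∈ Δ := H.closed (Deriv.ax h)

lemma mem_mp (H : MaxTh α Δ) {φ ψ : Form} (h1 : φ.imp ψ ∈ Δ) (h2 : φ ∈ Δ) : ψ ∈ Δ :=
  H.closed (Deriv.mp (Deriv.prem h1) (Deriv.prem h2))

lemma neg_mem_iff (H : MaxTh α Δ) {φ : Form} : Form.neg φ ∈ Δ ↔ φ ∉ Δ := by
  constructor
  · intro hn hφ
    exact H.nd (Deriv.mp (Deriv.mp (deriv_taut (taut_absurd φ α)) (Deriv.prem hφ))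
      (Deriv.prem hn))
  · intro hφ
    by_contra hn
    have d1 : Deriv TmdAx Δ (φ.imp α) := deduction (H.max φ hφ)
    have d2 : Deriv TmdAx Δ ((Form.neg φ).imp α) := deduction (H.max _ hn)
    exact H.nd (Deriv.mp (Deriv.mp (deriv_taut (taut_cases φ α)) d1) d2)

lemma imp_mem_iff (H : MaxTh α Δ) {φ ψ : Form} : φ.imp ψ ∈ Δ ↔ (φ ∈ Δ → ψ ∈ Δ) := by
  constructor
  · exact fun h hφ => H.mem_mp h hφ
  · intro h
    by_cases hφ : φ ∈ Δ
    · exact H.closed (Deriv.mp (deriv_taut (taut_K φ ψ)) (Deriv.prem (h hφ)))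
    · exact H.closed (Deriv.mp (deriv_taut (taut_efq φ ψ))
        (Deriv.prem (H.neg_mem_iff.2 hφ)))

/-! Modal membership facts -/

lemma mem_T (H : MaxTh α Δ) {φ : Form} (h : Form.box φ ∈ Δ) : φ ∈ Δ :=
  H.mem_mp (H.mem_ax (TmdAx.t φ)) h

lemma mem_M2 (H : MaxTh α Δ) {φ ψ : Form} (h : Form.box ψ ∈ Δ) : Form.box (φ.imp ψ) ∈ Δ :=
  H.mem_mp (H.mem_ax (TmdAx.m2 φ ψ)) h

lemma mem_K (H : MaxTh α Δ) {φ ψ : Form} (h1 : Form.box (φ.imp ψ) ∈ Δ) (h2 : Form.box φ ∈ Δ) :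
    Form.box ψ ∈ Δ :=
  H.mem_mp (H.mem_mp (H.mem_ax (TmdAx.k φ ψ)) h1) h2

lemma mem_Kdet (H : MaxTh α Δ) {φ ψ : Form} (h1 : Form.box (φ.imp ψ) ∈ Δ) (h2 : dia φ ∈ Δ) :
    Form.box ψ ∈ Δ :=
  H.mem_mp (H.mem_mp (H.mem_ax (TmdAx.kdet φ ψ)) h1) h2

lemma mem_K2 (H : MaxTh α Δ) {φ ψ : Form} (h1 : dia (φ.imp ψ) ∈ Δ) (h2 : Form.box φ ∈ Δ) :
    dia ψ ∈ Δ :=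
  H.mem_mp (H.mem_mp (H.mem_ax (TmdAx.k2 φ ψ)) h1) h2

lemma mem_M1 (H : MaxTh α Δ) {φ ψ : Form} (h : Form.neg (dia φ) ∈ Δ) : Form.box (φ.imp ψ) ∈ Δ :=
  H.mem_mp (H.mem_ax (TmdAx.m1 φ ψ)) h

lemma mem_M3 (H : MaxTh α Δ) {φ ψ : Form} (h : dia ψ ∈ Δ) : dia (φ.imp ψ) ∈ Δ :=
  H.mem_mp (H.mem_ax (TmdAx.m3 φ ψ)) h

lemma mem_M4 (H : MaxTh α Δ) {φ ψ : Form} (h : dia (Form.neg φ) ∈ Δ) : dia (φ.imp ψ) ∈ Δ :=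
  H.mem_mp (H.mem_ax (TmdAx.m4 φ ψ)) h

lemma box_dn_iff (H : MaxTh α Δ) {φ : Form} :
    Form.box (Form.neg (Form.neg φ)) ∈ Δ ↔ Form.box φ ∈ Δ :=
  ⟨fun h => H.mem_mp (H.mem_ax (TmdAx.dn2 φ)) h,
   fun h => H.mem_mp (H.mem_ax (TmdAx.dn1 φ)) h⟩

lemma dia_mem_iff (H : MaxTh α Δ) {φ : Form} : dia φ ∈ Δ ↔ Form.box (Form.neg φ) ∉ Δ :=
  H.neg_mem_iff

lemma dia_neg_mem_iff (H : MaxTh α Δ) {φ : Form} : dia (Form.neg φ) ∈ Δ ↔ Form.box φ ∉ Δ := by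
  rw [dia_mem_iff H, H.box_dn_iff]

lemma not_box_of_not_mem (H : MaxTh α Δ) {φ : Form} (h : φ ∉ Δ) : Form.box φ ∉ Δ :=
  fun hb => h (H.mem_T hb)

lemma dia_of_mem (H : MaxTh α Δ) {φ : Form} (h : φ ∈ Δ) : dia φ ∈ Δ := by
  rw [dia_mem_iff H]
  intro hb
  exact H.neg_mem_iff.1 (H.mem_T hb) h

end MaxTh

/-! ### The canonical valuation -/

noncomputable def canonV (Δ : Set Form) (φ : Form) : V4 :=
  if φ ∈ Δ then (if Form.box φ ∈ Δ then V4.Tp else V4.Cp)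
  else (if dia φ ∈ Δ then V4.Cm else V4.Fm)

lemma canonV_desig_iff {Δ : Set Form} {φ : Form} : (canonV Δ φ).desig ↔ φ ∈ Δ := by
  unfold canonV
  split_ifs <;> simp_all [V4.desig]

section Canon

variable {α : Form} {Δ : Set Form}

lemma canonV_eq_Tp_iff {φ : Form} :
    canonV Δ φ = V4.Tp ↔ (φ ∈ Δ ∧ Form.box φ ∈ Δ) := by
  unfold canonV; split_ifs <;> simp_all

lemma canonV_neg (H : MaxTh α Δ) (φ : Form) : canonV Δ (Form.neg φ) = neg4 (canonV Δ φ) := by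
  unfold canonV
  by_cases h1 : φ ∈ Δ
  · have hn : Form.neg φ ∉ Δ := fun h => H.neg_mem_iff.1 h h1
    by_cases h2 : Form.box φ ∈ Δ
    · have : dia (Form.neg φ) ∉ Δ := fun h => (H.dia_neg_mem_iff.1 h) h2
      simp [h1, h2, hn, this, neg4]
    · have : dia (Form.neg φ) ∈ Δ := H.dia_neg_mem_iff.2 h2
      simp [h1, h2, hn, this, neg4]
  · have hn : Form.neg φ ∈ Δ := H.neg_mem_iff.2 h1
    by_cases h2 : dia φ ∈ Δ
    · have : Form.box (Form.neg φ) ∉ Δ := fun h => (H.dia_mem_iff.1 h2) h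
      simp [h1, h2, hn, this, neg4]
    · have : Form.box (Form.neg φ) ∈ Δ := by
        by_contra h; exact h2 (H.dia_mem_iff.2 h)
      simp [h1, h2, hn, this, neg4]

lemma canonV_box (H : MaxTh α Δ) (φ : Form) : canonV Δ (Form.box φ) ∈ box4 (canonV Δ φ) := by
  by_cases h : Form.box φ ∈ Δ
  · have hφ : φ ∈ Δ := H.mem_T h
    have : canonV Δ φ = V4.Tp := by unfold canonV; simp [h, hφ]
    rw [this]
    unfold canonV box4
    by_cases h2 : Form.box (Form.box φ) ∈ Δ <;> simp [h, h2]
  · have hne : canonV Δ φ ≠ V4.Tp := fun he => h (canonV_eq_Tp_iff.1 he).2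
    have : canonV Δ (Form.box φ) = V4.Cm ∨ canonV Δ (Form.box φ) = V4.Fm := by
      unfold canonV
      by_cases h2 : dia (Form.box φ) ∈ Δ <;> simp [h, h2]
    unfold box4
    rcases this with h3 | h3 <;> simp [hne, h3]

lemma canonV_imp (H : MaxTh α Δ) (φ ψ : Form) :
    canonV Δ (φ.imp ψ) = imp4 (canonV Δ φ) (canonV Δ ψ) := by
  have himp : φ.imp ψ ∈ Δ ↔ (φ ∈ Δ → ψ ∈ Δ) := H.imp_mem_iff
  by_cases hφ : φ ∈ Δ
  · by_cases hbφ : Form.box φ ∈ Δ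
    · -- canonV φ = Tp
      have hvφ : canonV Δ φ = V4.Tp := by unfold canonV; simp [hφ, hbφ]
      by_cases hψ : ψ ∈ Δ
      · have hij : φ.imp ψ ∈ Δ := himp.2 (fun _ => hψ)
        by_cases hbψ : Form.box ψ ∈ Δ
        · -- Tp → Tp = Tp
          have hb : Form.box (φ.imp ψ) ∈ Δ := H.mem_M2 hbψ
          have h1 : canonV Δ ψ = V4.Tp := by unfold canonV; simp [hψ, hbψ]
          have h2 : canonV Δ (φ.imp ψ) = V4.Tp := by unfold canonV; simp [hij, hb]
          rw [hvφ, h1, h2]; rfl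
        · -- Tp → Cp = Cp
          have hb : Form.box (φ.imp ψ) ∉ Δ := fun h => hbψ (H.mem_K h hbφ)
          have h1 : canonV Δ ψ = V4.Cp := by unfold canonV; simp [hψ, hbψ]
          have h2 : canonV Δ (φ.imp ψ) = V4.Cp := by unfold canonV; simp [hij, hb]
          rw [hvφ, h1, h2]; rfl
      · have hij : φ.imp ψ ∉ Δ := fun h => hψ (himp.1 h hφ)
        by_cases hdψ : dia ψ ∈ Δ
        · -- Tp → Cm = Cm
          have hd : dia (φ.imp ψ) ∈ Δ := H.mem_M3 hdψ
          have h1 : canonV Δ ψ = V4.Cm := by unfold canonV; simp [hψ, hdψ]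
          have h2 : canonV Δ (φ.imp ψ) = V4.Cm := by unfold canonV; simp [hij, hd]
          rw [hvφ, h1, h2]; rfl
        · -- Tp → Fm = Fm
          have hd : dia (φ.imp ψ) ∉ Δ := fun h => hdψ (H.mem_K2 h hbφ)
          have h1 : canonV Δ ψ = V4.Fm := by unfold canonV; simp [hψ, hdψ]
          have h2 : canonV Δ (φ.imp ψ) = V4.Fm := by unfold canonV; simp [hij, hd]
          rw [hvφ, h1, h2]; rfl
    · -- canonV φ = Cp; note ◇φ ∈ Δ
      have hvφ : canonV Δ φ = V4.Cp := by unfold canonV; simp [hφ, hbφ]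
      have hdφ : dia φ ∈ Δ := H.dia_of_mem hφ
      by_cases hψ : ψ ∈ Δ
      · have hij : φ.imp ψ ∈ Δ := himp.2 (fun _ => hψ)
        by_cases hbψ : Form.box ψ ∈ Δ
        · -- Cp → Tp = Tp
          have hb : Form.box (φ.imp ψ) ∈ Δ := H.mem_M2 hbψ
          have h1 : canonV Δ ψ = V4.Tp := by unfold canonV; simp [hψ, hbψ]
          have h2 : canonV Δ (φ.imp ψ) = V4.Tp := by unfold canonV; simp [hij, hb]
          rw [hvφ, h1, h2]; rfl
        · -- Cp → Cp = Cp
          have hb : Form.box (φ.imp ψ) ∉ Δ := fun h => hbψ (H.mem_Kdet h hdφ)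
          have h1 : canonV Δ ψ = V4.Cp := by unfold canonV; simp [hψ, hbψ]
          have h2 : canonV Δ (φ.imp ψ) = V4.Cp := by unfold canonV; simp [hij, hb]
          rw [hvφ, h1, h2]; rfl
      · have hij : φ.imp ψ ∉ Δ := fun h => hψ (himp.1 h hφ)
        have hdnφ : dia (Form.neg φ) ∈ Δ := H.dia_neg_mem_iff.2 hbφ
        have hd : dia (φ.imp ψ) ∈ Δ := H.mem_M4 hdnφ
        by_cases hdψ : dia ψ ∈ Δ
        · -- Cp → Cm = Cm
          have h1 : canonV Δ ψ = V4.Cm := by unfold canonV; simp [hψ, hdψ]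
          have h2 : canonV Δ (φ.imp ψ) = V4.Cm := by unfold canonV; simp [hij, hd]
          rw [hvφ, h1, h2]; rfl
        · -- Cp → Fm = Cm
          have h1 : canonV Δ ψ = V4.Fm := by unfold canonV; simp [hψ, hdψ]
          have h2 : canonV Δ (φ.imp ψ) = V4.Cm := by unfold canonV; simp [hij, hd]
          rw [hvφ, h1, h2]; rfl
  · have hij : φ.imp ψ ∈ Δ := himp.2 (fun h => absurd h hφ)
    by_cases hdφ : dia φ ∈ Δ
    · -- canonV φ = Cm; result Tp or Cp via Kdet + T
      have hvφ : canonV Δ φ = V4.Cm := by unfold canonV; simp [hφ, hdφ]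
      by_cases hψ : ψ ∈ Δ
      · by_cases hbψ : Form.box ψ ∈ Δ
        · -- Cm → Tp = Tp
          have hb : Form.box (φ.imp ψ) ∈ Δ := H.mem_M2 hbψ
          have h1 : canonV Δ ψ = V4.Tp := by unfold canonV; simp [hψ, hbψ]
          have h2 : canonV Δ (φ.imp ψ) = V4.Tp := by unfold canonV; simp [hij, hb]
          rw [hvφ, h1, h2]; rfl
        · -- Cm → Cp = Cp
          have hb : Form.box (φ.imp ψ) ∉ Δ := fun h => hbψ (H.mem_Kdet h hdφ)
          have h1 : canonV Δ ψ = V4.Cp := by unfold canonV; simp [hψ, hbψ]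
          have h2 : canonV Δ (φ.imp ψ) = V4.Cp := by unfold canonV; simp [hij, hb]
          rw [hvφ, h1, h2]; rfl
      · -- Cm → Cm/Fm = Cp
        have hb : Form.box (φ.imp ψ) ∉ Δ := fun h => hψ (H.mem_T (H.mem_Kdet h hdφ))
        have h2 : canonV Δ (φ.imp ψ) = V4.Cp := by unfold canonV; simp [hij, hb]
        by_cases hdψ : dia ψ ∈ Δ
        · have h1 : canonV Δ ψ = V4.Cm := by unfold canonV; simp [hψ, hdψ]
          rw [hvφ, h1, h2]; rfl
        · have h1 : canonV Δ ψ = V4.Fm := by unfold canonV; simp [hψ, hdψ]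
          rw [hvφ, h1, h2]; rfl
    · -- canonV φ = Fm; result Tp via M1
      have hvφ : canonV Δ φ = V4.Fm := by unfold canonV; simp [hφ, hdφ]
      have hbnφ : Form.box (Form.neg φ) ∈ Δ := by
        by_contra h; exact hdφ (H.dia_mem_iff.2 h)
      have hnd : Form.neg (dia φ) ∈ Δ := H.neg_mem_iff.2 hdφ
      have hb : Form.box (φ.imp ψ) ∈ Δ := H.mem_M1 hnd
      have h2 : canonV Δ (φ.imp ψ) = V4.Tp := by unfold canonV; simp [hij, hb]
      rw [hvφ, h2]
      cases h : canonV Δ ψ <;> rfl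

lemma canonV_isVal (H : MaxTh α Δ) : IsVal4 (canonV Δ) :=
  ⟨canonV_neg H, canonV_imp H, canonV_box H⟩

end Canon

/-! ### Lindenbaum -/

lemma lindenbaum {Γ : Set Form} {α : Form} (h : ¬ Deriv TmdAx Γ α) :
    ∃ Δ, Γ ⊆ Δ ∧ MaxTh α Δ := by
  have := zorn_subset_nonempty {Δ : Set Form | ¬ Deriv TmdAx Δ α} ?_ Γ h
  · obtain ⟨Δ, hΓΔ, hmax⟩ := this
    refine ⟨Δ, hΓΔ, hmax.prop, fun φ hφ => ?_⟩
    by_contra hnd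
    have : insert φ Δ = Δ := (hmax.eq_of_subset hnd (Set.subset_insert _ _)).symm
    exact hφ (this ▸ Set.mem_insert φ Δ)
  · intro c hc hchain hne
    refine ⟨⋃₀ c, ?_, fun s hs => Set.subset_sUnion_of_mem hs⟩
    intro hder
    obtain ⟨S, hS, hdS⟩ := deriv_finite hder
    -- a finite subset of the union of a chain lies in one member
    have key : ∀ S : Finset Form, ↑S ⊆ ⋃₀ c → ∃ t ∈ c, ↑S ⊆ t := by
      intro S
      induction S using Finset.induction_on with
      | empty =>
        intro _
        obtain ⟨t, ht⟩ := hne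
        exact ⟨t, ht, by simp⟩
      | insert a S' hx ih =>
        intro hsub
        obtain ⟨t, htc, hst⟩ := ih (fun x hx => hsub (by simp [hx]))
        have ha : (a : Form) ∈ ⋃₀ c := hsub (by simp)
        obtain ⟨t', ht'c, hat'⟩ := ha
        rcases hchain.total htc ht'c with h | h
        · exact ⟨t', ht'c, by
            intro x hx
            simp only [Finset.coe_insert, Set.mem_insert_iff] at hx
            rcases hx with rfl | hx; exacts [hat', h (hst hx)]⟩
        · exact ⟨t, htc, by
            intro x hx
            simp only [Finset.coe_insert, Set.mem_insert_iff] at hx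
            rcases hx with rfl | hx; exacts [h hat', hst hx]⟩
    obtain ⟨t, htc, hSt⟩ := key S hS
    exact (hc htc) (deriv_mono hSt hdS)

/-! ### Completeness -/

lemma Tmd_complete {Γ : Set Form} {α : Form} (h : TmdEntails Γ α) :
    Deriv TmdAx Γ α := by
  by_contra hnd
  obtain ⟨Δ, hΓΔ, H⟩ := lindenbaum hnd
  have hval := canonV_isVal H
  have hdes := h (canonV Δ) hval (fun γ hγ => canonV_desig_iff.2 (hΓΔ hγ))
  have : α ∈ Δ := canonV_desig_iff.1 hdes
  exact H.nd (Deriv.prem this)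

end TmdCompleteness

/-- Soundness and completeness of Tmd with respect to the four-valued Nmatrix M_Tmd
with deterministic implication. -/
theorem Tmd_sound_complete (Γ : Set Form) (α : Form) :
    Deriv TmdAx Γ α ↔ TmdEntails Γ α :=
  ⟨Tmd_sound, Tmd_complete⟩
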